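/- Let (p,q) and (p',q') be two pairs of nonzero integers such that p q = p' q' and p is not equal to any of p', -p', q', -q'. Then at least one of the groups G_{p,q} and G_{p',q'} admits a generalized torsion element. -/

import Mathlib

/-- The set of conjugates `h⁻¹ * g * h` of an element `g` of a group. -/
def conjSet {G : Type*} [Group G] (g : G) : Set G := {x | ∃ h : G, x = h⁻¹ * g * h}

/-- `<<g>>^+`: the subsemigroup generated by all conjugates of `g`. -/
def ggP {G : Type*} [Group G] (g : G) : Subsemigroup G := Subsemigroup.closure (conjSet g)

/-- A generalized torsion element: a nontrivial element `g` with `1 ∈ <<g>>^+`. -/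
def IsGenTorsionElem {G : Type*} [Group G] (g : G) : Prop := g ≠ 1 ∧ (1 : G) ∈ ggP g

/-- `G` admits a generalized torsion element. -/
def HasGenTorsion (G : Type*) [Group G] : Prop := ∃ g : G, IsGenTorsionElem g

/-- The relators of the presentation
`< a, b, t | t a^p t⁻¹ = b⁻¹ a^p, t b^{-q} a⁻¹ t⁻¹ = b^{-q}, [b^q, a^p] = 1 >`,
where `a`, `b`, `t` are the generators `0`, `1`, `2` respectively, and
`[g,h] = g⁻¹ h⁻¹ g h`. -/
def gpqRels (p q : ℤ) : Set (FreeGroup (Fin 3)) :=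
  let a : FreeGroup (Fin 3) := FreeGroup.of 0
  let b : FreeGroup (Fin 3) := FreeGroup.of 1
  let t : FreeGroup (Fin 3) := FreeGroup.of 2
  { t * a ^ p * t⁻¹ * (b⁻¹ * a ^ p)⁻¹,
    t * b ^ (-q) * a⁻¹ * t⁻¹ * (b ^ (-q))⁻¹,
    (b ^ q)⁻¹ * (a ^ p)⁻¹ * b ^ q * a ^ p }

/-- `G_{p,q}`, the fundamental group of the 3-manifold obtained by 0-surgery along the
double twist knot `K_{p,q}`. -/
abbrev Gpq (p q : ℤ) := PresentedGroup (gpqRels p q)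

namespace GenTorsionAux

/-! ### Abstract lemmas: commutators of powers are products of conjugates -/

section Abstract

variable {G : Type*} [Group G]

lemma conj_mem_ggP (c h : G) : h⁻¹ * c * h ∈ ggP c :=
  Subsemigroup.subset_closure ⟨h, rfl⟩

lemma comm_pow_mem_ggP (x y : G) (m : ℕ) :
    y⁻¹ * (x ^ (m + 1))⁻¹ * y * x ^ (m + 1) ∈ ggP (y⁻¹ * x⁻¹ * y * x) := by
  induction m with
  | zero =>
      simpa using conj_mem_ggP (y⁻¹ * x⁻¹ * y * x) 1
  | succ m ih =>
      have key : y⁻¹ * (x ^ (m + 2))⁻¹ * y * x ^ (m + 2) =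
          (y⁻¹ * (x ^ (m + 1))⁻¹ * y * x ^ (m + 1)) *
            ((x ^ (m + 1))⁻¹ * (y⁻¹ * x⁻¹ * y * x) * x ^ (m + 1)) := by
        group
      rw [key]
      exact Subsemigroup.mul_mem _ ih (conj_mem_ggP _ _)

lemma hasGenTorsion_of_nat (x y : G) (n : ℕ) (hn : n ≠ 0)
    (hrel : y⁻¹ * (x ^ n)⁻¹ * y * x ^ n = 1)
    (h1 : y⁻¹ * x⁻¹ * y * x ≠ 1) : HasGenTorsion G := by
  obtain ⟨m, rfl⟩ := Nat.exists_eq_succ_of_ne_zero hn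
  exact ⟨y⁻¹ * x⁻¹ * y * x, h1, hrel ▸ comm_pow_mem_ggP x y m⟩

lemma hasGenTorsion_of_int (x y : G) (p : ℤ) (hp : p ≠ 0)
    (hrel : y⁻¹ * (x ^ p)⁻¹ * y * x ^ p = 1)
    (h1 : y⁻¹ * x⁻¹ * y * x ≠ 1) (h2 : y⁻¹ * x * y * x⁻¹ ≠ 1) : HasGenTorsion G := by
  rcases hp.lt_or_gt with hneg | hpos
  · have hx : x ^ p = x⁻¹ ^ (-p).toNat := by
      rw [← zpow_natCast, Int.toNat_of_nonneg (by omega), inv_zpow', neg_neg]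
    rw [hx] at hrel
    refine hasGenTorsion_of_nat x⁻¹ y (-p).toNat (by omega) hrel ?_
    simpa using h2
  · have hx : x ^ p = x ^ p.toNat := by
      rw [← zpow_natCast, Int.toNat_of_nonneg (by omega)]
    rw [hx] at hrel
    exact hasGenTorsion_of_nat x y p.toNat (by omega) hrel h1

end Abstract

/-! ### Rotation matrices -/

open Real Matrix

noncomputable def rx (θ : ℝ) : Matrix (Fin 3) (Fin 3) ℝ :=
  !![1, 0, 0; 0, cos θ, -sin θ; 0, sin θ, cos θ]

noncomputable def rz (θ : ℝ) : Matrix (Fin 3) (Fin 3) ℝ :=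
  !![cos θ, -sin θ, 0; sin θ, cos θ, 0; 0, 0, 1]

lemma rx_mul (θ ψ : ℝ) : rx θ * rx ψ = rx (θ + ψ) := by
  ext i j
  fin_cases i <;> fin_cases j <;>
    simp [rx, Matrix.mul_apply, Fin.sum_univ_three, Matrix.vecHead, Matrix.vecTail, cos_add, sin_add] <;> ring

lemma rz_mul (θ ψ : ℝ) : rz θ * rz ψ = rz (θ + ψ) := by
  ext i j
  fin_cases i <;> fin_cases j <;>
    simp [rz, Matrix.mul_apply, Fin.sum_univ_three, Matrix.vecHead, Matrix.vecTail, cos_add, sin_add] <;> ring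

lemma rx_zero : rx 0 = 1 := by
  ext i j
  fin_cases i <;> fin_cases j <;> simp [rx, Matrix.one_apply, Matrix.vecHead, Matrix.vecTail]

lemma rz_zero : rz 0 = 1 := by
  ext i j
  fin_cases i <;> fin_cases j <;> simp [rz, Matrix.one_apply, Matrix.vecHead, Matrix.vecTail]

noncomputable def uRx (θ : ℝ) : (Matrix (Fin 3) (Fin 3) ℝ)ˣ :=
  ⟨rx θ, rx (-θ), by rw [rx_mul, add_neg_cancel, rx_zero], by rw [rx_mul, neg_add_cancel, rx_zero]⟩

noncomputable def uRz (θ : ℝ) : (Matrix (Fin 3) (Fin 3) ℝ)ˣ :=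
  ⟨rz θ, rz (-θ), by rw [rz_mul, add_neg_cancel, rz_zero], by rw [rz_mul, neg_add_cancel, rz_zero]⟩

lemma uRx_inv (θ : ℝ) : (uRx θ)⁻¹ = uRx (-θ) := by
  apply Units.ext
  simp [uRx]

lemma uRz_inv (θ : ℝ) : (uRz θ)⁻¹ = uRz (-θ) := by
  apply Units.ext
  simp [uRz]

noncomputable def rxHom : Multiplicative ℝ →* (Matrix (Fin 3) (Fin 3) ℝ)ˣ :=
  MonoidHom.mk' (fun θ => uRx θ.toAdd)
    (fun a b => by apply Units.ext; simp [uRx, rx_mul, Units.val_mul])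

noncomputable def rzHom : Multiplicative ℝ →* (Matrix (Fin 3) (Fin 3) ℝ)ˣ :=
  MonoidHom.mk' (fun θ => uRz θ.toAdd)
    (fun a b => by apply Units.ext; simp [uRz, rz_mul, Units.val_mul])

lemma uRx_zpow (θ : ℝ) (n : ℤ) : (uRx θ) ^ n = uRx (n * θ) := by
  have h := _root_.map_zpow rxHom (Multiplicative.ofAdd θ) n
  rw [← ofAdd_zsmul] at h
  simpa [rxHom, zsmul_eq_mul] using h.symm

lemma uRz_zpow (θ : ℝ) (n : ℤ) : (uRz θ) ^ n = uRz (n * θ) := by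
  have h := _root_.map_zpow rzHom (Multiplicative.ofAdd θ) n
  rw [← ofAdd_zsmul] at h
  simpa [rzHom, zsmul_eq_mul] using h.symm

lemma rx_pi : rx π = !![1, 0, 0; 0, -1, 0; 0, 0, -1] := by
  simp [rx]

lemma rz_pi : rz π = !![-1, 0, 0; 0, -1, 0; 0, 0, 1] := by
  simp [rz]

lemma rz_neg_pi : rz (-π) = !![-1, 0, 0; 0, -1, 0; 0, 0, 1] := by
  simp [rz]

/-! ### The four matrix identities -/

section MatrixIdentities

variable {s1 c1 s2 c2 : ℝ}

lemma matI (h1 : s1 ^ 2 + c1 ^ 2 = 1) (h2 : s2 ^ 2 + c2 ^ 2 = 1) :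
    (!![c2, s2*c1, s2*s1; -s2, c2*c1, c2*s1; 0, -s1, c1] : Matrix (Fin 3) (Fin 3) ℝ) *
      !![c2, -s2, 0; s2*c1, c2*c1, -s1; s2*s1, c2*s1, c1] = 1 := by
  ext i j
  fin_cases i <;> fin_cases j <;>
    simp [Matrix.mul_apply, Fin.sum_univ_three, Matrix.vecHead, Matrix.vecTail, Matrix.one_apply]
  all_goals first
    | linear_combination (0:ℝ) * h1
    | linear_combination (s2^2) * h1 + h2
    | linear_combination (s2*c2) * h1
    | linear_combination (c2^2) * h1 + h2
    | linear_combination h1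

lemma matII (h1 : s1 ^ 2 + c1 ^ 2 = 1) (h2 : s2 ^ 2 + c2 ^ 2 = 1) :
    (!![c2, -s2, 0; s2*c1, c2*c1, -s1; s2*s1, c2*s1, c1] : Matrix (Fin 3) (Fin 3) ℝ) *
      !![c2, s2*c1, s2*s1; -s2, c2*c1, c2*s1; 0, -s1, c1] = 1 := by
  ext i j
  fin_cases i <;> fin_cases j <;>
    simp [Matrix.mul_apply, Fin.sum_univ_three, Matrix.vecHead, Matrix.vecTail, Matrix.one_apply]
  all_goals first
    | linear_combination (0:ℝ) * h1
    | linear_combination h2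
    | linear_combination (c2^2 + s2^2) * h1 + (1 - s1^2) * h2
    | linear_combination (s1*c1) * h2
    | linear_combination h1 + (s1^2) * h2

set_option maxHeartbeats 800000 in
lemma matIII (h1 : s1 ^ 2 + c1 ^ 2 = 1) (h2 : s2 ^ 2 + c2 ^ 2 = 1) :
    (!![c2, s2*c1, s2*s1; -s2, c2*c1, c2*s1; 0, -s1, c1] : Matrix (Fin 3) (Fin 3) ℝ) *
      !![(1:ℝ), 0, 0; 0, -1, 0; 0, 0, -1] *
      !![c2, -s2, 0; s2*c1, c2*c1, -s1; s2*s1, c2*s1, c1] =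
    !![2*c2^2 - 1, 2*s2*c2, 0; -(2*s2*c2), 2*c2^2 - 1, 0; 0, 0, 1] *
      !![(1:ℝ), 0, 0; 0, -1, 0; 0, 0, -1] := by
  ext i j
  fin_cases i <;> fin_cases j <;>
    simp [Matrix.mul_apply, Fin.sum_univ_three, Matrix.vecHead, Matrix.vecTail]
  all_goals first
    | linear_combination (0:ℝ) * h1
    | linear_combination (-(s2^2)) * h1 + (-1 : ℝ) * h2
    | linear_combination (-(s2*c2)) * h1
    | linear_combination (-(c2^2)) * h1 + h2
    | linear_combination (-1 : ℝ) * h1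

set_option maxHeartbeats 1600000 in
lemma matIV (h1 : s1 ^ 2 + c1 ^ 2 = 1) (h2 : s2 ^ 2 + c2 ^ 2 = 1) :
    (!![c2, s2*c1, s2*s1; -s2, c2*c1, c2*s1; 0, -s1, c1] : Matrix (Fin 3) (Fin 3) ℝ) *
      !![(-1:ℝ), 0, 0; 0, -1, 0; 0, 0, 1] *
      !![(1:ℝ), 0, 0; 0, 2*c1^2 - 1, 2*s1*c1; 0, -(2*s1*c1), 2*c1^2 - 1] *
      !![c2, -s2, 0; s2*c1, c2*c1, -s1; s2*s1, c2*s1, c1] =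
    !![(-1:ℝ), 0, 0; 0, -1, 0; 0, 0, 1] := by
  ext i j
  fin_cases i <;> fin_cases j <;>
    simp [Matrix.mul_apply, Fin.sum_univ_three, Matrix.vecHead, Matrix.vecTail]
  all_goals first
    | linear_combination (0:ℝ) * h1
    | linear_combination (-(s2^2) - 2*c1^2*s2^2) * h1 + (-1 : ℝ) * h2
    | linear_combination (-(s2*c2) - 2*c1^2*s2*c2) * h1
    | linear_combination (2*s1*c1*s2) * h1
    | linear_combination (-(c2^2) - 2*c1^2*c2^2) * h1 + (-1 : ℝ) * h2
    | linear_combination (2*s1*c1*c2) * h1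
    | linear_combination (1 + 2*c1^2) * h1

end MatrixIdentities

lemma sin_pi_div_ne_zero {p : ℤ} (hp : 2 ≤ p.natAbs) : sin (π / (p : ℝ)) ≠ 0 := by
  have hpos : ∀ r : ℤ, 2 ≤ r → 0 < sin (π / (r : ℝ)) := by
    intro r hr
    have hr' : (2 : ℝ) ≤ (r : ℝ) := by exact_mod_cast hr
    apply sin_pos_of_pos_of_lt_pi
    · positivity
    · have : (1 : ℝ) < (r : ℝ) := by linarith
      exact div_lt_self pi_pos this
  rcases le_or_gt 2 p with h | h
  · exact (hpos p h).ne'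
  · have h2 : 2 ≤ -p := by omega
    have : π / (p : ℝ) = -(π / ((-p : ℤ) : ℝ)) := by
      push_cast
      ring
    rw [this, Real.sin_neg]
    exact neg_ne_zero.mpr (hpos (-p) h2).ne'

end GenTorsionAux

open GenTorsionAux Real Matrix in
lemma gpq_hasGenTorsion (p q : ℤ) (hp : p ≠ 0) (hq : q ≠ 0)
    (hpq2 : 2 ≤ p.natAbs ∨ 2 ≤ q.natAbs) : HasGenTorsion (Gpq p q) := by
  have hpR : ((p : ℝ)) ≠ 0 := Int.cast_ne_zero.mpr hp
  have hqR : ((q : ℝ)) ≠ 0 := Int.cast_ne_zero.mpr hq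
  set s1 : ℝ := sin (π / (2 * p)) with hs1
  set c1 : ℝ := cos (π / (2 * p)) with hc1
  set s2 : ℝ := sin (π / (2 * q)) with hs2
  set c2 : ℝ := cos (π / (2 * q)) with hc2
  have h1 : s1 ^ 2 + c1 ^ 2 = 1 := sin_sq_add_cos_sq _
  have h2 : s2 ^ 2 + c2 ^ 2 = 1 := sin_sq_add_cos_sq _
  have hp2 : (2 : ℝ) * (π / (2 * p)) = π / p := by
    field_simp
  have hq2 : (2 : ℝ) * (π / (2 * q)) = π / q := by
    field_simp
  -- the images of the generators
  set uA := uRx (π / p) with huA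
  set uB := uRz (π / q) with huB
  set uT : (Matrix (Fin 3) (Fin 3) ℝ)ˣ :=
    ⟨!![c2, s2*c1, s2*s1; -s2, c2*c1, c2*s1; 0, -s1, c1],
     !![c2, -s2, 0; s2*c1, c2*c1, -s1; s2*s1, c2*s1, c1],
     matI h1 h2, matII h1 h2⟩ with huT
  -- powers
  have hA : uA ^ p = uRx π := by
    rw [huA, uRx_zpow]
    congr 1
    field_simp
    try ring
  have hBq : uB ^ q = uRz π := by
    rw [huB, uRz_zpow]
    congr 1
    field_simp
    try ring
  have hBmq : uB ^ (-q) = uRz (-π) := by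
    rw [huB, uRz_zpow]
    congr 1
    push_cast
    field_simp
    try ring
  -- entry expressions for rotation matrices of doubled angles
  have hrxp : rx (π / p) = !![(1:ℝ), 0, 0; 0, 2*c1^2 - 1, -(2*s1*c1); 0, 2*s1*c1, 2*c1^2 - 1] := by
    rw [rx, ← hp2, Real.cos_two_mul, Real.sin_two_mul]
    try rw [hs1, hc1]
    try norm_num
  have hrxnegp : rx (-(π / p)) = !![(1:ℝ), 0, 0; 0, 2*c1^2 - 1, 2*s1*c1; 0, -(2*s1*c1), 2*c1^2 - 1] := by
    rw [rx, Real.cos_neg, Real.sin_neg, ← hp2, Real.cos_two_mul, Real.sin_two_mul]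
    try rw [hs1, hc1]
    try norm_num
  have hrznegq : rz (-(π / q)) = !![2*c2^2 - 1, 2*s2*c2, 0; -(2*s2*c2), 2*c2^2 - 1, 0; 0, 0, 1] := by
    rw [rz, Real.cos_neg, Real.sin_neg, ← hq2, Real.cos_two_mul, Real.sin_two_mul]
    try rw [hs2, hc2]
    try norm_num
  -- the homomorphism
  set f : Fin 3 → (Matrix (Fin 3) (Fin 3) ℝ)ˣ := ![uA, uB, uT] with hf
  have hrels : ∀ r ∈ gpqRels p q, FreeGroup.lift f r = 1 := by
    intro r hr
    simp only [gpqRels, Set.mem_insert_iff, Set.mem_singleton_iff] at hr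
    rcases hr with rfl | rfl | rfl
    · simp only [_root_.map_mul, _root_.map_zpow, _root_.map_inv, FreeGroup.lift_apply_of, hf]
      simp only [Matrix.cons_val_zero, Matrix.cons_val_one, Matrix.head_cons,
        Matrix.cons_val_two, Matrix.tail_cons]
      rw [hA, mul_inv_eq_one, uRz_inv]
      apply Units.ext
      rw [huT]
      simp only [Units.val_mul, Units.inv_mk, Units.val_mk, uRx, uRz]
      rw [rx_pi, hrznegq]
      exact matIII h1 h2
    · simp only [_root_.map_mul, _root_.map_zpow, _root_.map_inv, FreeGroup.lift_apply_of, hf]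
      simp only [Matrix.cons_val_zero, Matrix.cons_val_one, Matrix.head_cons,
        Matrix.cons_val_two, Matrix.tail_cons]
      rw [hBmq, mul_inv_eq_one, uRx_inv]
      apply Units.ext
      rw [huT]
      simp only [Units.val_mul, Units.inv_mk, Units.val_mk, uRx, uRz]
      rw [rz_neg_pi, hrxnegp]
      exact matIV h1 h2
    · simp only [_root_.map_mul, _root_.map_zpow, _root_.map_inv, FreeGroup.lift_apply_of, hf]
      simp only [Matrix.cons_val_zero, Matrix.cons_val_one, Matrix.head_cons,
        Matrix.cons_val_two, Matrix.tail_cons]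
      rw [hA, hBq]
      have hcomm : uRz π * uRx π = uRx π * uRz π := by
        apply Units.ext
        simp only [Units.val_mul, uRx, uRz, Units.val_mk]
        rw [rx_pi, rz_pi]
        ext i j
        fin_cases i <;> fin_cases j <;>
          simp [Matrix.mul_apply, Fin.sum_univ_three, Matrix.vecHead, Matrix.vecTail]
      rw [mul_assoc ((uRz π)⁻¹ * (uRx π)⁻¹) (uRz π) (uRx π), hcomm]
      group
  set ρ : Gpq p q →* (Matrix (Fin 3) (Fin 3) ℝ)ˣ := PresentedGroup.toGroup hrels with hρ
  set aG : Gpq p q := PresentedGroup.of 0 with haG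
  set bG : Gpq p q := PresentedGroup.of 1 with hbG
  have hρa : ρ aG = uA := PresentedGroup.toGroup.of hrels
  have hρb : ρ bG = uB := PresentedGroup.toGroup.of hrels
  -- the relation [b^q, a^p] = 1 in Gpq
  have hrel3 : (bG ^ q)⁻¹ * (aG ^ p)⁻¹ * bG ^ q * aG ^ p = 1 := by
    have hmem : (FreeGroup.of 1 ^ q)⁻¹ * (FreeGroup.of 0 ^ p)⁻¹ * FreeGroup.of 1 ^ q *
        FreeGroup.of (0 : Fin 3) ^ p ∈ gpqRels p q := by
      simp [gpqRels]
    have := (QuotientGroup.eq_one_iff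
        ((FreeGroup.of 1 ^ q)⁻¹ * (FreeGroup.of 0 ^ p)⁻¹ * FreeGroup.of 1 ^ q *
          FreeGroup.of (0 : Fin 3) ^ p)).mpr (Subgroup.subset_normalClosure hmem)
    have hmk : (PresentedGroup.mk (gpqRels p q))
        ((FreeGroup.of 1 ^ q)⁻¹ * (FreeGroup.of 0 ^ p)⁻¹ * FreeGroup.of 1 ^ q *
          FreeGroup.of (0 : Fin 3) ^ p) = 1 := this
    simp only [_root_.map_mul, _root_.map_inv, _root_.map_zpow] at hmk
    exact hmk
  -- nontriviality helper: commutation of images detected on a matrix entry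
  rcases hpq2 with hcase | hcase
  · -- use g = [b^q, a^{±1}]
    have hsin : sin (π / (p : ℝ)) ≠ 0 := sin_pi_div_ne_zero hcase
    apply hasGenTorsion_of_int aG (bG ^ q) p hp hrel3
    · -- [b^q, a] ≠ 1
      intro hcon
      have := congrArg ρ hcon
      simp only [_root_.map_mul, _root_.map_inv, _root_.map_zpow, hρa, hρb, _root_.map_one] at this
      rw [hBq] at this
      have hcomm : uRz π * uA = uA * uRz π := by
        have h' := congrArg (fun z => (uA * uRz π) * z) this
        simpa [mul_assoc] using h'
      have hval := congrArg Units.val hcomm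
      rw [huA] at hval
      simp only [Units.val_mul, uRx, uRz] at hval
      rw [rz_pi] at hval
      have hent := congrFun (congrFun hval 1) 2
      simp [rx, Matrix.mul_apply, Fin.sum_univ_three, Matrix.vecHead, Matrix.vecTail] at hent
      apply hsin
      linarith
    · -- [b^q, a⁻¹] ≠ 1
      intro hcon
      have := congrArg ρ hcon
      simp only [_root_.map_mul, _root_.map_inv, _root_.map_zpow, hρa, hρb, _root_.map_one] at this
      rw [hBq] at this
      have hcomm : uRz π * uA⁻¹ = uA⁻¹ * uRz π := by
        have h' := congrArg (fun z => (uA⁻¹ * uRz π) * z) this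
        simpa [mul_assoc] using h'
      have hval := congrArg Units.val hcomm
      rw [huA, uRx_inv] at hval
      simp only [Units.val_mul, uRx, uRz] at hval
      rw [rz_pi] at hval
      have hent := congrFun (congrFun hval 1) 2
      simp [rx, Matrix.mul_apply, Fin.sum_univ_three, Matrix.vecHead, Matrix.vecTail] at hent
      apply hsin
      linarith
  · -- use g = [a^p, b^{±1}]
    have hsin : sin (π / (q : ℝ)) ≠ 0 := sin_pi_div_ne_zero hcase
    have hrel3' : (aG ^ p)⁻¹ * (bG ^ q)⁻¹ * aG ^ p * bG ^ q = 1 := by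
      have := congrArg (·⁻¹) hrel3
      simpa [_root_.mul_inv_rev, mul_assoc] using this
    apply hasGenTorsion_of_int bG (aG ^ p) q hq hrel3'
    · -- [a^p, b] ≠ 1
      intro hcon
      have := congrArg ρ hcon
      simp only [_root_.map_mul, _root_.map_inv, _root_.map_zpow, hρa, hρb, _root_.map_one] at this
      rw [hA] at this
      have hcomm : uRx π * uB = uB * uRx π := by
        have h' := congrArg (fun z => (uB * uRx π) * z) this
        simpa [mul_assoc] using h'
      have hval := congrArg Units.val hcomm
      rw [huB] at hval
      simp only [Units.val_mul, uRx, uRz] at hval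
      rw [rx_pi] at hval
      have hent := congrFun (congrFun hval 0) 1
      simp [rz, Matrix.mul_apply, Fin.sum_univ_three, Matrix.vecHead, Matrix.vecTail] at hent
      apply hsin
      linarith
    · -- [a^p, b⁻¹] ≠ 1
      intro hcon
      have := congrArg ρ hcon
      simp only [_root_.map_mul, _root_.map_inv, _root_.map_zpow, hρa, hρb, _root_.map_one] at this
      rw [hA] at this
      have hcomm : uRx π * uB⁻¹ = uB⁻¹ * uRx π := by
        have h' := congrArg (fun z => (uB⁻¹ * uRx π) * z) this
        simpa [mul_assoc] using h'
      have hval := congrArg Units.val hcomm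
      rw [huB, uRz_inv] at hval
      simp only [Units.val_mul, uRx, uRz] at hval
      rw [rx_pi] at hval
      have hent := congrFun (congrFun hval 0) 1
      simp [rz, Matrix.mul_apply, Fin.sum_univ_three, Real.sin_neg, Matrix.vecHead,
        Matrix.vecTail] at hent
      apply hsin
      linarith
    
/-- if `pq = p'q'` and `p ∉ {p', -p', q', -q'}`, then at least one of
`G_{p,q}`, `G_{p',q'}` admits a generalized torsion element. -/
theorem hasGenTorsion_or (p q p' q' : ℤ) (hp : p ≠ 0) (hq : q ≠ 0)
    (hp' : p' ≠ 0) (hq' : q' ≠ 0) (hpq : p * q = p' * q')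
    (h1 : p ≠ p') (h2 : p ≠ -p') (h3 : p ≠ q') (h4 : p ≠ -q') :
    HasGenTorsion (Gpq p q) ∨ HasGenTorsion (Gpq p' q') := by
  by_cases hbig : 2 ≤ p.natAbs ∨ 2 ≤ q.natAbs
  · exact Or.inl (gpq_hasGenTorsion p q hp hq hbig)
  · exfalso
    push_neg at hbig
    have hpa : p.natAbs = 1 := by omega
    have hqa : q.natAbs = 1 := by omega
    have habs : p.natAbs * q.natAbs = p'.natAbs * q'.natAbs := by
      rw [← Int.natAbs_mul, ← Int.natAbs_mul, hpq]
    rw [hpa, hqa] at habs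
    have hp'a : p'.natAbs = 1 := by
      have := Nat.eq_one_of_mul_eq_one_right habs.symm
      omega
    omega
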